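/- For natural numbers n and d : Fin n → ℕ, let ρ, σ : ∀ j, Matrix (Fin (d j)) (Fin (d j)) ℂ be families of density matrices (each ρ j and σ j positive semidefinite with trace 1). Then the trace norm of the difference of the iterated Kronecker products satisfies ‖ ⊗_{j=0}^{n−1} ρ j − ⊗_{j=0}^{n−1} σ j ‖₁ ≤ Σ_{j=0}^{n−1} ‖ ρ j − σ j ‖₁. -/

import Mathlib

open scoped ComplexOrder

/-- The trace norm of a square complex matrix: the trace of the positive semidefinite
square root of `Aᴴ·A` (i.e. the sum of the singular values of `A`). -/
noncomputable def traceNorm {n : Type*} [Fintype n] [DecidableEq n]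
    (A : Matrix n n ℂ) : ℝ :=
  (((Matrix.posSemidef_conjTranspose_mul_self A).1.eigenvectorUnitary : Matrix n n ℂ) *
      Matrix.diagonal (((↑) : ℝ → ℂ) ∘ (√·) ∘ (Matrix.posSemidef_conjTranspose_mul_self A).1.eigenvalues) *
      (star (Matrix.posSemidef_conjTranspose_mul_self A).1.eigenvectorUnitary : Matrix n n ℂ)).trace.re

namespace TN

open Matrix Complex

variable {n : Type*} [Fintype n] [DecidableEq n]

/-- The positive semidefinite square root of `Aᴴ * A` used in `traceNorm`. -/
noncomputable def psqrt (A : Matrix n n ℂ) : Matrix n n ℂ :=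
  ((Matrix.posSemidef_conjTranspose_mul_self A).1.eigenvectorUnitary : Matrix n n ℂ) *
      Matrix.diagonal (((↑) : ℝ → ℂ) ∘ (√·) ∘ (Matrix.posSemidef_conjTranspose_mul_self A).1.eigenvalues) *
      (star (Matrix.posSemidef_conjTranspose_mul_self A).1.eigenvectorUnitary : Matrix n n ℂ)

open scoped MatrixOrder in
lemma psqrt_eq_cfc (A : Matrix n n ℂ) : psqrt A = CFC.sqrt (Aᴴ * A) := by
  rw [CFC.sqrt_eq_cfc, cfc_nnreal_eq_real _ (Aᴴ * A) (posSemidef_conjTranspose_mul_self A).nonneg,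
    (Matrix.posSemidef_conjTranspose_mul_self A).1.cfc_eq]
  simp only [IsHermitian.cfc, psqrt, Real.coe_sqrt, Real.coe_toNNReal']
  rw [Unitary.conjStarAlgAut_apply]
  congr 2
  ext i j
  simp only [diagonal_apply, Function.comp_apply]
  split_ifs with hij
  · rcases le_total ((posSemidef_conjTranspose_mul_self A).1.eigenvalues i) 0 with h | h
    · rw [max_eq_right h, Real.sqrt_zero, Real.sqrt_eq_zero'.mpr h]
      simp
    · rw [max_eq_left h]
      simp
  · rfl

open scoped MatrixOrder in
lemma psqrt_psd (A : Matrix n n ℂ) : (psqrt A).PosSemidef := by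
  rw [psqrt_eq_cfc]; exact (CFC.sqrt_nonneg _).posSemidef

open scoped MatrixOrder in
lemma psqrt_sq (A : Matrix n n ℂ) : (psqrt A) ^ 2 = Aᴴ * A := by
  rw [psqrt_eq_cfc]; exact CFC.sq_sqrt _ (posSemidef_conjTranspose_mul_self A).nonneg

open scoped MatrixOrder in
lemma psqrt_eq_of_sq_eq {A B : Matrix n n ℂ} (hB : B.PosSemidef) (h : B ^ 2 = Aᴴ * A) :
    psqrt A = B := by
  rw [psqrt_eq_cfc]
  exact CFC.sqrt_unique (by rw [← pow_two, h]) hB.nonneg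

open scoped MatrixOrder in
lemma psd_factor {A : Matrix n n ℂ} (hA : A.PosSemidef) : ∃ C : Matrix n n ℂ, A = Cᴴ * C := by
  refine ⟨CFC.sqrt A, ?_⟩
  rw [(CFC.sqrt_nonneg A).posSemidef.1.eq, CFC.sqrt_mul_sqrt_self A hA.nonneg]

lemma traceNorm_eq_re_trace (A B : Matrix n n ℂ) (hB : B.PosSemidef)
    (h : B ^ 2 = Aᴴ * A) : traceNorm A = B.trace.re := by
  show (psqrt A).trace.re = _
  rw [psqrt_eq_of_sq_eq hB h]

lemma traceNorm_of_posSemidef {A : Matrix n n ℂ} (hA : A.PosSemidef) :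
    traceNorm A = A.trace.re :=
  traceNorm_eq_re_trace A A hA (by rw [pow_two, hA.1])

lemma traceNorm_isHermitian {A : Matrix n n ℂ} (hA : A.IsHermitian) :
    traceNorm A = ∑ i, |hA.eigenvalues i| := by
  set W : Matrix n n ℂ := (hA.eigenvectorUnitary : Matrix n n ℂ) with hWdef
  have hW1 : W * Wᴴ = 1 := by
    simpa [Matrix.star_eq_conjTranspose] using
      (Matrix.mem_unitaryGroup_iff).mp (hA.eigenvectorUnitary).2
  have hW2 : Wᴴ * W = 1 := by
    simpa [Matrix.star_eq_conjTranspose] using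
      (Matrix.mem_unitaryGroup_iff').mp (hA.eigenvectorUnitary).2
  set B : Matrix n n ℂ := W * diagonal (fun i => ((|hA.eigenvalues i| : ℝ) : ℂ)) * Wᴴ with hBdef
  have hBpsd : B.PosSemidef := by
    refine Matrix.PosSemidef.mul_mul_conjTranspose_same ?_ W
    refine Matrix.posSemidef_diagonal_iff.mpr fun i => ?_
    rw [Complex.zero_le_real]
    exact abs_nonneg _
  have hspec : A = W * diagonal (RCLike.ofReal ∘ hA.eigenvalues) * Wᴴ := by
    simpa [Matrix.star_eq_conjTranspose] using hA.spectral_theorem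
  have key : ∀ d : n → ℂ, (W * diagonal d * Wᴴ) * (W * diagonal d * Wᴴ)
      = W * diagonal (fun i => d i * d i) * Wᴴ := by
    intro d
    calc (W * diagonal d * Wᴴ) * (W * diagonal d * Wᴴ)
        = W * (diagonal d * (Wᴴ * W) * diagonal d) * Wᴴ := by
          simp only [Matrix.mul_assoc]
      _ = W * diagonal (fun i => d i * d i) * Wᴴ := by
          rw [hW2, Matrix.mul_one, Matrix.diagonal_mul_diagonal]
  have hAA : A * A = W * diagonal (fun i => ((hA.eigenvalues i : ℝ) : ℂ)
      * ((hA.eigenvalues i : ℝ) : ℂ)) * Wᴴ := by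
    conv_lhs => rw [hspec]
    rw [key]
    rfl
  have hsq : B ^ 2 = Aᴴ * A := by
    rw [hA.eq, pow_two, hBdef, key, hAA]
    have : (fun i => ((|hA.eigenvalues i| : ℝ) : ℂ) * ((|hA.eigenvalues i| : ℝ) : ℂ))
        = fun i => ((hA.eigenvalues i : ℝ) : ℂ) * ((hA.eigenvalues i : ℝ) : ℂ) := by
      funext i
      rw [← Complex.ofReal_mul, ← Complex.ofReal_mul, ← abs_mul, abs_mul_self]
    rw [this]
  rw [traceNorm_eq_re_trace A B hBpsd hsq, hBdef, Matrix.trace_mul_cycle,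
    hW2, Matrix.one_mul, Matrix.trace_diagonal]
  simp


lemma real_bound (s μ : n → ℝ) (hs : ∀ i, |s i| ≤ 1) (c : n → n → ℝ)
    (hc0 : ∀ i j, 0 ≤ c i j) (hc1 : ∀ j, ∑ i, c i j = 1) :
    |∑ i, ∑ j, s i * μ j * c i j| ≤ ∑ j, |μ j| := by
  calc |∑ i, ∑ j, s i * μ j * c i j| ≤ ∑ i, ∑ j, |s i * μ j * c i j| := by
        refine (Finset.abs_sum_le_sum_abs _ _).trans ?_
        gcongr with i _
        exact Finset.abs_sum_le_sum_abs _ _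
    _ = ∑ i, ∑ j, |s i| * |μ j| * c i j := by
        refine Finset.sum_congr rfl fun i _ => Finset.sum_congr rfl fun j _ => ?_
        rw [abs_mul, abs_mul, _root_.abs_of_nonneg (hc0 i j)]
    _ ≤ ∑ i, ∑ j, 1 * |μ j| * c i j := by
        gcongr with i _ j _
        · exact hc0 i j
        · exact hs i
    _ = ∑ j, |μ j| * ∑ i, c i j := by
        rw [Finset.sum_comm]
        simp [Finset.mul_sum]
    _ = ∑ j, |μ j| := by simp [hc1]

lemma diag_trace (d : n → ℂ) (X : Matrix n n ℂ) :
    (Matrix.diagonal d * X).trace = ∑ i, d i * X i i := by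
  simp [Matrix.trace, Matrix.diag, Matrix.mul_apply, Matrix.diagonal_apply, ite_mul]

lemma diag_mul_apply (d : n → ℂ) (X : Matrix n n ℂ) (i j : n) :
    (Matrix.diagonal d * X) i j = d i * X i j := by
  simp [Matrix.mul_apply, Matrix.diagonal_apply, ite_mul]

lemma abs_re_trace_le {A : Matrix n n ℂ} (hA : A.IsHermitian) {U : Matrix n n ℂ}
    (hU : U * Uᴴ = 1) (s : n → ℝ) (hs : ∀ i, |s i| ≤ 1) :
    |(((U * diagonal (fun i => ((s i : ℝ) : ℂ)) * Uᴴ) * A).trace).re|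
      ≤ ∑ j, |hA.eigenvalues j| := by
  set W : Matrix n n ℂ := (hA.eigenvectorUnitary : Matrix n n ℂ) with hWdef
  have hW2 : Wᴴ * W = 1 := by
    simpa [Matrix.star_eq_conjTranspose] using
      (Matrix.mem_unitaryGroup_iff').mp (hA.eigenvectorUnitary).2
  set M : Matrix n n ℂ := Wᴴ * U with hM
  have hMH : Uᴴ * W = Mᴴ := by
    rw [hM, conjTranspose_mul, conjTranspose_conjTranspose]
  have hMM : M * Mᴴ = 1 := by
    rw [hM, conjTranspose_mul, conjTranspose_conjTranspose]
    calc Wᴴ * U * (Uᴴ * W) = Wᴴ * (U * Uᴴ) * W := by simp only [Matrix.mul_assoc]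
      _ = 1 := by rw [hU, Matrix.mul_one, hW2]
  have hrow : ∀ j, ∑ i, Complex.normSq (M j i) = 1 := by
    intro j
    have h2 : (M * Mᴴ) j j = (1 : Matrix n n ℂ) j j := by rw [hMM]
    rw [Matrix.mul_apply, Matrix.one_apply_eq] at h2
    simp only [Matrix.conjTranspose_apply] at h2
    have h3 : ((∑ i, Complex.normSq (M j i) : ℝ) : ℂ) = 1 := by
      rw [Complex.ofReal_sum, ← h2]
      refine Finset.sum_congr rfl fun i _ => ?_
      simp [Complex.star_def, Complex.mul_conj]
    exact_mod_cast h3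
  set μ : n → ℝ := hA.eigenvalues with hμ
  have hspec : A = W * diagonal (fun i => ((μ i : ℝ) : ℂ)) * Wᴴ := by
    simpa [Matrix.star_eq_conjTranspose, Function.comp_def, hμ] using hA.spectral_theorem
  have htr : ((U * diagonal (fun i => ((s i : ℝ) : ℂ)) * Uᴴ) * A).trace
      = ((∑ i, ∑ j, s i * μ j * Complex.normSq (M j i) : ℝ) : ℂ) := by
    conv_lhs => rw [hspec]
    have e1 : (U * diagonal (fun i => ((s i : ℝ) : ℂ)) * Uᴴ)
          * (W * diagonal (fun i => ((μ i : ℝ) : ℂ)) * Wᴴ)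
        = U * (diagonal (fun i => ((s i : ℝ) : ℂ))
            * (Uᴴ * (W * (diagonal (fun i => ((μ i : ℝ) : ℂ)) * Wᴴ)))) := by
      simp only [Matrix.mul_assoc]
    rw [e1, Matrix.trace_mul_comm]
    have e2 : diagonal (fun i => ((s i : ℝ) : ℂ))
          * (Uᴴ * (W * (diagonal (fun i => ((μ i : ℝ) : ℂ)) * Wᴴ))) * U
        = diagonal (fun i => ((s i : ℝ) : ℂ))
            * (Mᴴ * (diagonal (fun i => ((μ i : ℝ) : ℂ)) * M)) := by
      rw [← hMH, hM]
      simp only [Matrix.mul_assoc]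
    rw [e2, diag_trace, Complex.ofReal_sum]
    refine Finset.sum_congr rfl fun i _ => ?_
    rw [Matrix.mul_apply, Complex.ofReal_sum, Finset.mul_sum]
    refine Finset.sum_congr rfl fun j _ => ?_
    rw [Matrix.conjTranspose_apply, diag_mul_apply, Complex.star_def,
      Complex.ofReal_mul, Complex.ofReal_mul, Complex.normSq_eq_conj_mul_self]
    ring
  rw [htr, Complex.ofReal_re]
  exact real_bound s μ hs (fun i j => Complex.normSq (M j i))
    (fun i j => Complex.normSq_nonneg _) hrow


lemma trace_im {A : Matrix n n ℂ} (hA : A.IsHermitian) : A.trace.im = 0 := by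
  have h := Matrix.trace_conjTranspose A
  rw [hA.eq] at h
  have h2 := congrArg Complex.im h
  simp only [Complex.star_def, Complex.conj_im] at h2
  linarith

lemma traceNorm_add_le {A B : Matrix n n ℂ} (hA : A.IsHermitian) (hB : B.IsHermitian) :
    traceNorm (A + B) ≤ traceNorm A + traceNorm B := by
  have hH : (A + B).IsHermitian := hA.add hB
  set U : Matrix n n ℂ := (hH.eigenvectorUnitary : Matrix n n ℂ) with hUdef
  have hU1 : U * Uᴴ = 1 := by
    simpa [Matrix.star_eq_conjTranspose] using
      (Matrix.mem_unitaryGroup_iff).mp (hH.eigenvectorUnitary).2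
  have hU2 : Uᴴ * U = 1 := by
    simpa [Matrix.star_eq_conjTranspose] using
      (Matrix.mem_unitaryGroup_iff').mp (hH.eigenvectorUnitary).2
  set lam : n → ℝ := hH.eigenvalues with hlam
  have hspec : A + B = U * diagonal (fun i => ((lam i : ℝ) : ℂ)) * Uᴴ := by
    simpa [Matrix.star_eq_conjTranspose, Function.comp_def, hlam] using hH.spectral_theorem
  set s : n → ℝ := fun i => if 0 ≤ lam i then 1 else -1 with hsdef
  have hs1 : ∀ i, |s i| ≤ 1 := fun i => by
    by_cases h : 0 ≤ lam i <;> simp [hsdef, h]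
  set S : Matrix n n ℂ := U * diagonal (fun i => ((s i : ℝ) : ℂ)) * Uᴴ with hSdef
  have key : ((S * (A + B)).trace).re = ∑ i, |lam i| := by
    conv_lhs => rw [hspec]
    have e : S * (U * diagonal (fun i => ((lam i : ℝ) : ℂ)) * Uᴴ)
        = U * (diagonal (fun i => ((s i : ℝ) : ℂ))
            * (Uᴴ * (U * (diagonal (fun i => ((lam i : ℝ) : ℂ)) * Uᴴ)))) := by
      rw [hSdef]; simp only [Matrix.mul_assoc]
    rw [e, ← Matrix.mul_assoc Uᴴ U, hU2, Matrix.one_mul,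
      ← Matrix.mul_assoc (diagonal _) (diagonal _) Uᴴ, Matrix.diagonal_mul_diagonal,
      Matrix.trace_mul_comm, Matrix.mul_assoc, hU2, Matrix.mul_one, Matrix.trace_diagonal]
    have : ∀ i, ((s i : ℝ) : ℂ) * ((lam i : ℝ) : ℂ) = ((|lam i| : ℝ) : ℂ) := by
      intro i
      rw [← Complex.ofReal_mul]
      congr 1
      by_cases h : 0 ≤ lam i
      · simp [hsdef, h, _root_.abs_of_nonneg h]
      · push_neg at h
        simp [hsdef, not_le.mpr h, _root_.abs_of_neg h]
    simp only [this, ← Complex.ofReal_sum, Complex.ofReal_re]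
  have step : ((S * (A + B)).trace).re = ((S * A).trace).re + ((S * B).trace).re := by
    rw [Matrix.mul_add, Matrix.trace_add, Complex.add_re]
  calc traceNorm (A + B) = ∑ i, |lam i| := traceNorm_isHermitian hH
    _ = ((S * A).trace).re + ((S * B).trace).re := by rw [← key, step]
    _ ≤ |((S * A).trace).re| + |((S * B).trace).re| :=
        add_le_add (le_abs_self _) (le_abs_self _)
    _ ≤ (∑ j, |hA.eigenvalues j|) + ∑ j, |hB.eigenvalues j| := by
        rw [hSdef]
        exact add_le_add (abs_re_trace_le hA hU1 s hs1) (abs_re_trace_le hB hU1 s hs1)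
    _ = traceNorm A + traceNorm B := by
        rw [traceNorm_isHermitian hA, traceNorm_isHermitian hB]


section Kron

open Kronecker

variable {m : Type*} [Fintype m] [DecidableEq m]

lemma conjT_kron (A : Matrix n n ℂ) (B : Matrix m m ℂ) : (A ⊗ₖ B)ᴴ = Aᴴ ⊗ₖ Bᴴ := by
  ext ⟨i, j⟩ ⟨k, l⟩
  simp [Matrix.conjTranspose_apply, star_mul']

lemma psd_kron {A : Matrix n n ℂ} {B : Matrix m m ℂ} (hA : A.PosSemidef)
    (hB : B.PosSemidef) : (A ⊗ₖ B).PosSemidef := by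
  obtain ⟨C, rfl⟩ := psd_factor hA
  obtain ⟨D, rfl⟩ := psd_factor hB
  rw [Matrix.mul_kronecker_mul, ← conjT_kron]
  exact Matrix.posSemidef_conjTranspose_mul_self _

lemma traceNorm_kron (A : Matrix n n ℂ) (B : Matrix m m ℂ) :
    traceNorm (A ⊗ₖ B) = traceNorm A * traceNorm B := by
  set SA := psqrt A with hSA
  set SB := psqrt B with hSB
  have hSAp : SA.PosSemidef := psqrt_psd _
  have hSBp : SB.PosSemidef := psqrt_psd _
  have h : (SA ⊗ₖ SB) ^ 2 = (A ⊗ₖ B)ᴴ * (A ⊗ₖ B) := by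
    rw [conjT_kron, ← Matrix.mul_kronecker_mul, pow_two, ← Matrix.mul_kronecker_mul,
      ← pow_two, ← pow_two, psqrt_sq, psqrt_sq]
  rw [traceNorm_eq_re_trace _ _ (psd_kron hSAp hSBp) h, Matrix.trace_kronecker,
    Complex.mul_re, trace_im hSAp.1, trace_im hSBp.1, mul_zero, sub_zero]
  rfl

lemma trace_submatrix_equiv (e : m ≃ n) (M : Matrix n n ℂ) :
    (M.submatrix e e).trace = M.trace := by
  simp only [Matrix.trace, Matrix.diag, Matrix.submatrix_apply]
  exact e.sum_comp fun i => M i i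

lemma traceNorm_submatrix (e : m ≃ n) (M : Matrix n n ℂ) :
    traceNorm (M.submatrix e e) = traceNorm M := by
  set S := psqrt M with hS
  have hSp : S.PosSemidef := psqrt_psd _
  have h : (S.submatrix e e) ^ 2 = (M.submatrix e e)ᴴ * (M.submatrix e e) := by
    rw [Matrix.conjTranspose_submatrix, pow_two, Matrix.submatrix_mul_equiv,
      Matrix.submatrix_mul_equiv, ← pow_two, psqrt_sq]
  rw [traceNorm_eq_re_trace _ _ (hSp.submatrix e) h, trace_submatrix_equiv]
  rfl

end Kron

end TN


/-- The tensor product of a family of matrices, as a matrix indexed by the product of the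
local index sets: its `(a, b)` entry is `∏ j, ρ j (a j) (b j)`. -/
def tensorProdMatrix {n : ℕ} {d : Fin n → ℕ}
    (ρ : ∀ j, Matrix (Fin (d j)) (Fin (d j)) ℂ) :
    Matrix (∀ j, Fin (d j)) (∀ j, Fin (d j)) ℂ :=
  Matrix.of fun a b => ∏ j, ρ j (a j) (b j)

namespace TN

open Matrix Kronecker

lemma tensor_zero {d : Fin 0 → ℕ} (ρ : ∀ j, Matrix (Fin (d j)) (Fin (d j)) ℂ) :
    tensorProdMatrix ρ = 1 := by
  ext a b
  rw [Subsingleton.elim a b]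
  simp [tensorProdMatrix, Matrix.one_apply]

lemma tensor_succ {n : ℕ} {d : Fin (n + 1) → ℕ}
    (ρ : ∀ j, Matrix (Fin (d j)) (Fin (d j)) ℂ) :
    tensorProdMatrix ρ = ((ρ 0) ⊗ₖ tensorProdMatrix (fun j : Fin n => ρ j.succ)).submatrix
      (Fin.consEquiv (fun j => Fin (d j))).symm (Fin.consEquiv (fun j => Fin (d j))).symm := by
  ext a b
  simp [tensorProdMatrix, Matrix.submatrix_apply, Fin.consEquiv, Fin.tail,
    Fin.prod_univ_succ]

lemma tensor_psd : ∀ {n : ℕ} {d : Fin n → ℕ} (ρ : ∀ j, Matrix (Fin (d j)) (Fin (d j)) ℂ),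
    (∀ j, (ρ j).PosSemidef) → (tensorProdMatrix ρ).PosSemidef := by
  intro n
  induction n with
  | zero =>
    intro d ρ _
    rw [tensor_zero]
    exact Matrix.PosDef.posSemidef Matrix.PosDef.one
  | succ k ih =>
    intro d ρ h
    rw [tensor_succ]
    exact (psd_kron (h 0) (ih _ (fun j => h j.succ))).submatrix _

lemma tensor_trace : ∀ {n : ℕ} {d : Fin n → ℕ} (ρ : ∀ j, Matrix (Fin (d j)) (Fin (d j)) ℂ),
    (tensorProdMatrix ρ).trace = ∏ j, (ρ j).trace := by
  intro n
  induction n with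
  | zero =>
    intro d ρ
    rw [tensor_zero]
    simp
  | succ k ih =>
    intro d ρ
    rw [tensor_succ, trace_submatrix_equiv, Matrix.trace_kronecker, ih, Fin.prod_univ_succ]

lemma main_aux : ∀ (n : ℕ) (d : Fin n → ℕ)
    (ρ σ : ∀ j, Matrix (Fin (d j)) (Fin (d j)) ℂ),
    (∀ j, (ρ j).PosSemidef) → (∀ j, (ρ j).trace = 1) →
    (∀ j, (σ j).PosSemidef) → (∀ j, (σ j).trace = 1) →
    traceNorm (tensorProdMatrix ρ - tensorProdMatrix σ) ≤ ∑ j, traceNorm (ρ j - σ j) := by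
  intro n
  induction n with
  | zero =>
    intro d ρ σ _ _ _ _
    rw [tensor_zero, tensor_zero, sub_self]
    rw [traceNorm_of_posSemidef Matrix.PosSemidef.zero]
    simp
  | succ k ih =>
    intro d ρ σ hρ hρtr hσ hσtr
    set P := tensorProdMatrix (fun j : Fin k => ρ j.succ) with hPdef
    set Q := tensorProdMatrix (fun j : Fin k => σ j.succ) with hQdef
    have hPpsd : P.PosSemidef := tensor_psd _ (fun j => hρ j.succ)
    have hQpsd : Q.PosSemidef := tensor_psd _ (fun j => hσ j.succ)
    have hPtr : P.trace = 1 := by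
      rw [hPdef, tensor_trace]
      simp [hρtr]
    have hQtr : Q.trace = 1 := by
      rw [hQdef, tensor_trace]
      simp [hσtr]
    have hsub : tensorProdMatrix ρ - tensorProdMatrix σ
        = (((ρ 0) ⊗ₖ P) - ((σ 0) ⊗ₖ Q)).submatrix
          (Fin.consEquiv (fun j => Fin (d j))).symm
          (Fin.consEquiv (fun j => Fin (d j))).symm := by
      rw [tensor_succ ρ, tensor_succ σ]
      ext a b
      simp [Matrix.submatrix_apply, Matrix.sub_apply, hPdef, hQdef]
    rw [hsub, traceNorm_submatrix]
    have decomp : (ρ 0) ⊗ₖ P - (σ 0) ⊗ₖ Q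
        = ((ρ 0 - σ 0) ⊗ₖ P) + ((σ 0) ⊗ₖ (P - Q)) := by
      ext ⟨i, j⟩ ⟨a, b⟩
      simp only [Matrix.sub_apply, Matrix.add_apply, Matrix.kroneckerMap_apply]
      ring
    have h1 : ((ρ 0 - σ 0) ⊗ₖ P).IsHermitian := by
      have := conjT_kron (ρ 0 - σ 0) P
      rw [((hρ 0).1.sub (hσ 0).1).eq, hPpsd.1.eq] at this
      exact this
    have h2 : ((σ 0) ⊗ₖ (P - Q)).IsHermitian := by
      have := conjT_kron (σ 0) (P - Q)
      rw [(hσ 0).1.eq, (hPpsd.1.sub hQpsd.1).eq] at this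
      exact this
    rw [decomp]
    refine (traceNorm_add_le h1 h2).trans ?_
    rw [traceNorm_kron, traceNorm_kron, traceNorm_of_posSemidef hPpsd, hPtr,
      traceNorm_of_posSemidef (hσ 0), hσtr 0, Complex.one_re, mul_one, one_mul,
      Fin.sum_univ_succ]
    have hPQ : traceNorm (P - Q) ≤ ∑ j : Fin k, traceNorm (ρ j.succ - σ j.succ) :=
      ih _ _ _ (fun j => hρ j.succ) (fun j => hρtr j.succ)
        (fun j => hσ j.succ) (fun j => hσtr j.succ)
    linarith

end TN

/-- Telescoping bound: the trace distance between tensor products of density matrices is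
at most the sum of the local trace distances. -/
theorem traceNorm_tensorProd_sub_tensorProd_le (n : ℕ) (d : Fin n → ℕ)
    (ρ σ : ∀ j, Matrix (Fin (d j)) (Fin (d j)) ℂ)
    (hρ : ∀ j, (ρ j).PosSemidef) (hρtr : ∀ j, (ρ j).trace = 1)
    (hσ : ∀ j, (σ j).PosSemidef) (hσtr : ∀ j, (σ j).trace = 1) :
    traceNorm (tensorProdMatrix ρ - tensorProdMatrix σ) ≤
      ∑ j, traceNorm (ρ j - σ j) := by
  exact TN.main_aux n d ρ σ hρ hρtr hσ hσtr
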